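/- For every real a > 0, with all square roots taken as principal branches of the complex square root: (i) √(−a−i) = −i·√(a+i); (ii) √(−a+i) = i·√(a−i); (iii) √(a+i)·√(a−i) = √(a²+1); and (iv) (−a·√(−a−i) + √(a+i)) · (−a·√(−a+i) + √(a−i)) = (a²+1)^{3/2}, which is a positive real number. -/

import Mathlib

open Complex

private lemma sqrt_of_sq {z w : ℂ} (h : z ^ 2 = w) (hz : 0 < z.re) :
    w ^ ((1 : ℂ) / 2) = z := by
  rw [← h, one_div]
  exact Complex.sq_cpow_two_inv hz

/-- Principal-branch square-root identities for real `a > 0`: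
(i) `√(−a−i) = −i√(a+i)`; (ii) `√(−a+i) = i√(a−i)`; (iii) `√(a+i)·√(a−i) = √(a²+1)`;
(iv) `(−a√(−a−i) + √(a+i))·(−a√(−a+i) + √(a−i)) = (a²+1)^{3/2}`, a positive real. -/
theorem stmt16 (a : ℝ) (ha : 0 < a) :
    (-(a : ℂ) - I) ^ ((1 : ℂ) / 2) = -I * (((a : ℂ) + I) ^ ((1 : ℂ) / 2)) ∧
    (-(a : ℂ) + I) ^ ((1 : ℂ) / 2) = I * (((a : ℂ) - I) ^ ((1 : ℂ) / 2)) ∧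
    ((a : ℂ) + I) ^ ((1 : ℂ) / 2) * ((a : ℂ) - I) ^ ((1 : ℂ) / 2)
        = (Real.sqrt (a ^ 2 + 1) : ℂ) ∧
    (-(a : ℂ) * (-(a : ℂ) - I) ^ ((1 : ℂ) / 2) + ((a : ℂ) + I) ^ ((1 : ℂ) / 2))
        * (-(a : ℂ) * (-(a : ℂ) + I) ^ ((1 : ℂ) / 2) + ((a : ℂ) - I) ^ ((1 : ℂ) / 2))
        = (((a ^ 2 + 1) ^ ((3 : ℝ) / 2) : ℝ) : ℂ) ∧
    0 < (a ^ 2 + 1) ^ ((3 : ℝ) / 2) := by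
  set w1 : ℂ := ((a : ℂ) + I) ^ ((1 : ℂ) / 2) with hw1
  set w2 : ℂ := ((a : ℂ) - I) ^ ((1 : ℂ) / 2) with hw2
  have habs1 : a < ‖(a : ℂ) + I‖ := by
    have : ‖(a : ℂ) + I‖ = Real.sqrt (a ^ 2 + 1) := by
      rw [Complex.norm_def, Complex.normSq_apply]
      norm_num; ring_nf
    rw [this]
    nlinarith [Real.sq_sqrt (by positivity : (0:ℝ) ≤ a ^ 2 + 1),
      Real.sqrt_nonneg (a ^ 2 + 1)]
  have habs2 : a < ‖(a : ℂ) - I‖ := by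
    have : ‖(a : ℂ) - I‖ = Real.sqrt (a ^ 2 + 1) := by
      rw [Complex.norm_def, Complex.normSq_apply]
      norm_num; ring_nf
    rw [this]
    nlinarith [Real.sq_sqrt (by positivity : (0:ℝ) ≤ a ^ 2 + 1),
      Real.sqrt_nonneg (a ^ 2 + 1)]
  have hre1 : 0 < w1.re := by
    rw [hw1, one_div, Complex.cpow_inv_two_re]
    have : (0:ℝ) < (‖(a:ℂ) + I‖ + ((a:ℂ) + I).re) / 2 := by
      simp only [Complex.add_re, Complex.ofReal_re, Complex.I_re]
      nlinarith
    exact Real.sqrt_pos.mpr this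
  have him1 : 0 < w1.im := by
    rw [hw1, one_div, Complex.cpow_inv_two_im_eq_sqrt (by simp)]
    have : (0:ℝ) < (‖(a:ℂ) + I‖ - ((a:ℂ) + I).re) / 2 := by
      simp only [Complex.add_re, Complex.ofReal_re, Complex.I_re]
      nlinarith
    exact Real.sqrt_pos.mpr this
  have hre2 : 0 < w2.re := by
    rw [hw2, one_div, Complex.cpow_inv_two_re]
    have : (0:ℝ) < (‖(a:ℂ) - I‖ + ((a:ℂ) - I).re) / 2 := by
      simp only [Complex.sub_re, Complex.ofReal_re, Complex.I_re]
      nlinarith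
    exact Real.sqrt_pos.mpr this
  have him2 : w2.im < 0 := by
    rw [hw2, one_div, Complex.cpow_inv_two_im_eq_neg_sqrt (by simp)]
    have : (0:ℝ) < (‖(a:ℂ) - I‖ - ((a:ℂ) - I).re) / 2 := by
      simp only [Complex.sub_re, Complex.ofReal_re, Complex.I_re]
      nlinarith
    simpa using Real.sqrt_pos.mpr this
  have hsq1 : w1 ^ 2 = (a : ℂ) + I := by
    rw [hw1, one_div]
    simpa using Complex.cpow_nat_inv_pow ((a:ℂ) + I) (two_ne_zero)
  have hsq2 : w2 ^ 2 = (a : ℂ) - I := by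
    rw [hw2, one_div]
    simpa using Complex.cpow_nat_inv_pow ((a:ℂ) - I) (two_ne_zero)
  have h1 : (-(a : ℂ) - I) ^ ((1 : ℂ) / 2) = -I * w1 := by
    refine sqrt_of_sq ?_ ?_
    · rw [mul_pow, neg_pow, hsq1, Complex.I_sq]; ring
    · simpa [Complex.mul_re] using him1
  have h2 : (-(a : ℂ) + I) ^ ((1 : ℂ) / 2) = I * w2 := by
    refine sqrt_of_sq ?_ ?_
    · rw [mul_pow, hsq2, Complex.I_sq]; ring
    · simp only [Complex.mul_re, Complex.I_re, Complex.I_im]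
      nlinarith
  have h3 : w1 * w2 = (Real.sqrt (a ^ 2 + 1) : ℂ) := by
    have key : (((a:ℝ) ^ 2 + 1 : ℝ) : ℂ) ^ ((1 : ℂ) / 2) = w1 * w2 := by
      refine sqrt_of_sq ?_ ?_
      · rw [mul_pow, hsq1, hsq2]
        push_cast
        ring_nf
        rw [Complex.I_sq]; ring
      · simp only [Complex.mul_re]
        nlinarith
    rw [← key, show ((1:ℂ)/2) = (((1:ℝ)/2 : ℝ) : ℂ) by norm_num,
      ← Complex.ofReal_cpow (by positivity)]
    norm_num [Real.sqrt_eq_rpow]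
  refine ⟨h1, h2, h3, ?_, by positivity⟩
  rw [h1, h2]
  have : (-(a : ℂ) * (-I * w1) + w1) * (-(a : ℂ) * (I * w2) + w2)
      = (w1 * w2) * ((1 : ℂ) + a ^ 2) := by ring_nf; rw [Complex.I_sq]; ring
  rw [this, h3]
  have hrpow : (a ^ 2 + 1) ^ ((3 : ℝ) / 2)
      = Real.sqrt (a ^ 2 + 1) * (1 + a ^ 2) := by
    have hpos : (0:ℝ) < a ^ 2 + 1 := by positivity
    rw [show (3:ℝ)/2 = 1/2 + 1 by norm_num, Real.rpow_add hpos,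
      Real.rpow_one, ← Real.sqrt_eq_rpow]
    ring
  rw [hrpow]
  push_cast
  ring
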